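/- With Q_n(u) = (∂+u)^n(1), the addition formula Q_n(u+v) = ∑_{k=0}^{n} C(n,k) Q_k(u) Q_{n−k}(v) FAILS in general for noncommuting situations but HOLDS for commuting differential indeterminates: precisely, for u, v elements of a commutative differential ring, Q_n(u+v) = ∑_{k=0}^{n} C(n,k) Q_k(u) Q_{n−k}(v) for all n ≥ 0. -/
import Mathlib


/-- **Addition formula for the polynomials `Q_n`.** In a commutative differential
ring `(R, d)` of characteristic zero, with `Q w n = (∂+w)^n(1)` defined by the
recursion `Q w 0 = 1`, `Q w (n+1) = d(Q w n) + w·Q w n`, one has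
`Q_n(u+v) = ∑_{k=0}^n C(n,k) Q_k(u) Q_{n−k}(v)` for all `n ≥ 0`. -/
theorem stmt5 {R : Type*} [CommRing R] [CharZero R] (d : R →+ R)
    (hleib : ∀ a b : R, d (a * b) = d a * b + a * d b)
    (u v : R)
    (Q : R → ℕ → R) (hQ0 : ∀ w, Q w 0 = 1)
    (hQs : ∀ w n, Q w (n + 1) = d (Q w n) + w * Q w n) :
    ∀ n : ℕ, Q (u + v) n = ∑ k ∈ Finset.range (n + 1), n.choose k • (Q u k * Q v (n - k)) := by
  intro n
  induction n with
  | zero => simp [hQ0]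
  | succ n ih =>
    rw [hQs, ih, map_sum, Finset.mul_sum, ← Finset.sum_add_distrib]
    have key : ∀ k ∈ Finset.range (n + 1),
        d (n.choose k • (Q u k * Q v (n - k))) +
          (u + v) * (n.choose k • (Q u k * Q v (n - k)))
        = n.choose k • (Q u (k + 1) * Q v (n - k))
          + n.choose k • (Q u k * Q v (n + 1 - k)) := by
      intro k hk
      have hk' : k ≤ n := Nat.lt_succ_iff.mp (Finset.mem_range.mp hk)
      have h1 : n + 1 - k = (n - k) + 1 := by omega
      rw [h1, map_nsmul, hleib, hQs, hQs, ← smul_add]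
      ring
    rw [Finset.sum_congr rfl key, Finset.sum_add_distrib]
    -- RHS target: sum over range (n+2)
    rw [Finset.sum_range_succ' (fun k => (n+1).choose k • (Q u k * Q v (n + 1 - k)))]
    have pascal : ∀ i, (n + 1).choose (i + 1) = n.choose i + n.choose (i + 1) :=
      fun i => Nat.choose_succ_succ n i
    have split : ∑ i ∈ Finset.range (n + 1),
        (n + 1).choose (i + 1) • (Q u (i + 1) * Q v (n + 1 - (i + 1)))
        = ∑ i ∈ Finset.range (n + 1), n.choose i • (Q u (i + 1) * Q v (n - i))
          + ∑ i ∈ Finset.range (n + 1), n.choose (i + 1) • (Q u (i + 1) * Q v (n - i)) := by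
      rw [← Finset.sum_add_distrib]
      refine Finset.sum_congr rfl fun i hi => ?_
      rw [pascal, add_smul, Nat.succ_sub_succ]
    rw [split]
    -- now handle second sum: ∑_{k=0}^n C(n,k)•Qu k Qv(n+1-k)
    have h2 : ∑ k ∈ Finset.range (n + 1), n.choose k • (Q u k * Q v (n + 1 - k))
        = ∑ i ∈ Finset.range (n + 1), n.choose (i + 1) • (Q u (i + 1) * Q v (n - i))
          + Q v (n + 1) := by
      rw [Finset.sum_range_succ' (fun k => n.choose k • (Q u k * Q v (n + 1 - k)))]
      have : ∑ i ∈ Finset.range (n + 1), n.choose (i + 1) • (Q u (i + 1) * Q v (n - i))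
          = ∑ i ∈ Finset.range n, n.choose (i + 1) • (Q u (i + 1) * Q v (n - i)) := by
        rw [Finset.sum_range_succ, Nat.choose_succ_self, zero_smul, add_zero]
      rw [this]
      congr 1
      · exact Finset.sum_congr rfl fun i hi => by rw [Nat.succ_sub_succ]
      · simp [hQ0]
    rw [h2]
    simp [hQ0]
    ring
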